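/- Fix a realization of the noisy attributes and let η := η_0 + η_1 (so η < 1). Let f, g : X → {0,1} be classifiers, ε ∈ (0, 1], λ > 0, and suppose: Pr_D[f ≠ g] := #{a : f(x_a) ≠ g(x_a)}/N ≤ ε·(1−η)·λ/10; the denominators (1−η_1)·μ̂_0 − η_1·μ̂_1 and (1−η_0)·μ̂_1 − η_0·μ̂_0 are positive; (1−η_1)·Pr[g=1,Ẑ=0] − η_1·Pr[g=1,Ẑ=1] ≥ 0.45·(1−η)·λ; and (1−η_0)·Pr[g=1,Ẑ=1] − η_0·Pr[g=1,Ẑ=0] ≥ 0.45·(1−η)·λ. Then for each i ∈ {0,1}: (1 − 0.45ε)·Γ_i(g) ≤ Γ_i(f) ≤ (1 + 0.45ε)·Γ_i(g). -/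

import Mathlib

open scoped Classical

noncomputable section

/-- Empirical frequency of a predicate over `N` samples. -/
def empFreq (N : ℕ) (P : Fin N → Prop) : ℝ :=
  ((Finset.univ.filter P).card : ℝ) / N

/-- Probability, over independent flipping noise with rates `η0, η1`, of an event on the
noisy binary protected attributes. -/
def noiseProb (N : ℕ) (z : Fin N → Bool) (η0 η1 : ℝ)
    (E : (Fin N → Bool) → Prop) : ℝ :=
  ∑ zh : Fin N → Bool,
    if E zh then
      ∏ a, (if zh a = z a then 1 - cond (z a) η1 η0 else cond (z a) η1 η0)
    else 0

/-- `Pr[f = 1, Z' = i]` for the attribute assignment `z'` (true or noisy). -/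
def prJoint {X : Type} (N : ℕ) (x : Fin N → X) (f : X → Bool)
    (z' : Fin N → Bool) (i : Bool) : ℝ :=
  empFreq N (fun a => f (x a) = true ∧ z' a = i)

/-- `Pr[Z' = i]` for the attribute assignment `z'`. -/
def muOf (N : ℕ) (z' : Fin N → Bool) (i : Bool) : ℝ :=
  empFreq N (fun a => z' a = i)

/-- `Pr[f = 1 ∣ Z' = i]`. -/
def rate {X : Type} (N : ℕ) (x : Fin N → X) (f : X → Bool)
    (z' : Fin N → Bool) (i : Bool) : ℝ :=
  prJoint N x f z' i / muOf N z' i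

/-- Statistical rate `γ(f, ·)` with respect to attribute assignment `z'`. -/
def gammaSR {X : Type} (N : ℕ) (x : Fin N → X) (f : X → Bool)
    (z' : Fin N → Bool) : ℝ :=
  min (rate N x f z' false) (rate N x f z' true) /
    max (rate N x f z' false) (rate N x f z' true)

/-- Denoised rate `Γ_0(f)`. -/
def Gamma0 {X : Type} (N : ℕ) (x : Fin N → X) (η0 η1 : ℝ) (f : X → Bool)
    (zh : Fin N → Bool) : ℝ :=
  ((1 - η1) * prJoint N x f zh false - η1 * prJoint N x f zh true) /
    ((1 - η1) * muOf N zh false - η1 * muOf N zh true)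

/-- Denoised rate `Γ_1(f)`. -/
def Gamma1 {X : Type} (N : ℕ) (x : Fin N → X) (η0 η1 : ℝ) (f : X → Bool)
    (zh : Fin N → Bool) : ℝ :=
  ((1 - η0) * prJoint N x f zh true - η0 * prJoint N x f zh false) /
    ((1 - η0) * muOf N zh true - η0 * muOf N zh false)

/-- Denoised statistical rate `γ^Δ(f, Ŝ)`. -/
def gammaDelta {X : Type} (N : ℕ) (x : Fin N → X) (η0 η1 : ℝ) (f : X → Bool)
    (zh : Fin N → Bool) : ℝ :=
  min (Gamma0 N x η0 η1 f zh / Gamma1 N x η0 η1 f zh)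
    (Gamma1 N x η0 η1 f zh / Gamma0 N x η0 η1 f zh)

/-- Empirical Hamming distance `Pr_D[f ≠ g]` between two classifiers on the samples. -/
def hammDist {X : Type} (N : ℕ) (x : Fin N → X) (f g : X → Bool) : ℝ :=
  empFreq N (fun a => f (x a) ≠ g (x a))

lemma empFreq_congr (N : ℕ) {P Q : Fin N → Prop} (h : ∀ a, P a ↔ Q a) :
    empFreq N P = empFreq N Q := by
  unfold empFreq
  have h2 : Finset.filter P Finset.univ = Finset.filter Q Finset.univ :=
    Finset.filter_congr (fun a _ => h a)
  rw [h2]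

lemma empFreq_le_add (N : ℕ) {P Q R : Fin N → Prop} (h : ∀ a, P a → Q a ∨ R a) :
    empFreq N P ≤ empFreq N Q + empFreq N R := by
  unfold empFreq
  rw [← add_div]
  apply div_le_div_of_nonneg_right ?_ (Nat.cast_nonneg N)
  have h2 : Finset.filter P Finset.univ ⊆
      Finset.filter Q Finset.univ ∪ Finset.filter R Finset.univ := by
    intro a ha
    simp only [Finset.mem_filter, Finset.mem_univ, true_and] at ha
    simp only [Finset.mem_union, Finset.mem_filter, Finset.mem_univ, true_and]
    exact h a ha
  calc ((Finset.filter P Finset.univ).card : ℝ)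
      ≤ ((Finset.filter Q Finset.univ ∪ Finset.filter R Finset.univ).card : ℝ) := by
        exact_mod_cast Finset.card_le_card h2
    _ ≤ _ := by exact_mod_cast Finset.card_union_le _ _

lemma hammDist_comm {X : Type} (N : ℕ) (x : Fin N → X) (f g : X → Bool) :
    hammDist N x f g = hammDist N x g f := by
  unfold hammDist
  exact empFreq_congr N (fun a => ne_comm)

lemma hammDist_nonneg {X : Type} (N : ℕ) (x : Fin N → X) (f g : X → Bool) :
    0 ≤ hammDist N x f g :=
  div_nonneg (Nat.cast_nonneg _) (Nat.cast_nonneg _)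

lemma prJoint_le {X : Type} (N : ℕ) (x : Fin N → X) (f g : X → Bool)
    (zh : Fin N → Bool) (i : Bool) :
    prJoint N x f zh i ≤ prJoint N x g zh i + hammDist N x f g := by
  unfold prJoint hammDist
  refine empFreq_le_add N (fun a ha => ?_)
  by_cases hg : g (x a) = true
  · exact Or.inl ⟨hg, ha.2⟩
  · exact Or.inr (by simp [ha.1, hg])

/-- For a fixed realization of the noisy attributes: if `f` and `g` are
close in empirical Hamming distance and `g` has large denoised numerators, then
`Γ_i(f) ∈ (1 ± 0.45ε)·Γ_i(g)` for both `i ∈ {0,1}`. -/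
theorem stmt_6 {X : Type} (N : ℕ) (hN : 1 ≤ N)
    (x : Fin N → X) (z : Fin N → Bool) (y : Fin N → Bool) (zh : Fin N → Bool)
    (η0 η1 : ℝ) (hη0 : 0 < η0 ∧ η0 < 1/2) (hη1 : 0 < η1 ∧ η1 < 1/2)
    (f g : X → Bool) (ε : ℝ) (hε : 0 < ε ∧ ε ≤ 1) (lam : ℝ) (hlam : 0 < lam)
    (hclose : hammDist N x f g ≤ ε * (1 - (η0 + η1)) * lam / 10)
    (hd0 : 0 < (1 - η1) * muOf N zh false - η1 * muOf N zh true)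
    (hd1 : 0 < (1 - η0) * muOf N zh true - η0 * muOf N zh false)
    (hg0 : 0.45 * ((1 - (η0 + η1)) * lam) ≤
      (1 - η1) * prJoint N x g zh false - η1 * prJoint N x g zh true)
    (hg1 : 0.45 * ((1 - (η0 + η1)) * lam) ≤
      (1 - η0) * prJoint N x g zh true - η0 * prJoint N x g zh false) :
    ((1 - 0.45 * ε) * Gamma0 N x η0 η1 g zh ≤ Gamma0 N x η0 η1 f zh ∧
      Gamma0 N x η0 η1 f zh ≤ (1 + 0.45 * ε) * Gamma0 N x η0 η1 g zh) ∧
    ((1 - 0.45 * ε) * Gamma1 N x η0 η1 g zh ≤ Gamma1 N x η0 η1 f zh ∧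
      Gamma1 N x η0 η1 f zh ≤ (1 + 0.45 * ε) * Gamma1 N x η0 η1 g zh) := by
  obtain ⟨hη0p, hη0h⟩ := hη0
  obtain ⟨hη1p, hη1h⟩ := hη1
  obtain ⟨hεp, hε1⟩ := hε
  have h1 := prJoint_le N x f g zh false
  have h2 := prJoint_le N x g f zh false
  have h3 := prJoint_le N x f g zh true
  have h4 := prJoint_le N x g f zh true
  rw [hammDist_comm] at h2 h4
  have hdnn := hammDist_nonneg N x f g
  unfold Gamma0 Gamma1
  set d := hammDist N x f g with hdd
  set Pf0 := prJoint N x f zh false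
  set Pf1 := prJoint N x f zh true
  set Pg0 := prJoint N x g zh false
  set Pg1 := prJoint N x g zh true
  -- d is small compared with each numerator of g
  have hm0 : ε * (0.45 * ((1 - (η0 + η1)) * lam)) ≤
      ε * ((1 - η1) * Pg0 - η1 * Pg1) := mul_le_mul_of_nonneg_left hg0 hεp.le
  have hm1 : ε * (0.45 * ((1 - (η0 + η1)) * lam)) ≤
      ε * ((1 - η0) * Pg1 - η0 * Pg0) := mul_le_mul_of_nonneg_left hg1 hεp.le
  have hdn0 : d ≤ 0.45 * ε * ((1 - η1) * Pg0 - η1 * Pg1) := by nlinarith [hm0, hclose, hdnn]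
  have hdn1 : d ≤ 0.45 * ε * ((1 - η0) * Pg1 - η0 * Pg0) := by nlinarith [hm1, hclose, hdnn]
  -- coefficient-weighted bounds
  have a1 : (1 - η1) * Pg0 ≤ (1 - η1) * (Pf0 + d) :=
    mul_le_mul_of_nonneg_left h2 (by linarith)
  have a2 : η1 * Pf1 ≤ η1 * (Pg1 + d) := mul_le_mul_of_nonneg_left h3 hη1p.le
  have a3 : (1 - η1) * Pf0 ≤ (1 - η1) * (Pg0 + d) :=
    mul_le_mul_of_nonneg_left h1 (by linarith)
  have a4 : η1 * Pg1 ≤ η1 * (Pf1 + d) := mul_le_mul_of_nonneg_left h4 hη1p.le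
  have b1 : (1 - η0) * Pg1 ≤ (1 - η0) * (Pf1 + d) :=
    mul_le_mul_of_nonneg_left h4 (by linarith)
  have b2 : η0 * Pf0 ≤ η0 * (Pg0 + d) := mul_le_mul_of_nonneg_left h1 hη0p.le
  have b3 : (1 - η0) * Pf1 ≤ (1 - η0) * (Pg1 + d) :=
    mul_le_mul_of_nonneg_left h3 (by linarith)
  have b4 : η0 * Pg0 ≤ η0 * (Pf0 + d) := mul_le_mul_of_nonneg_left h2 hη0p.le
  have k0l : (1 - 0.45 * ε) * ((1 - η1) * Pg0 - η1 * Pg1) ≤ (1 - η1) * Pf0 - η1 * Pf1 := by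
    linarith
  have k0u : (1 - η1) * Pf0 - η1 * Pf1 ≤ (1 + 0.45 * ε) * ((1 - η1) * Pg0 - η1 * Pg1) := by
    linarith
  have k1l : (1 - 0.45 * ε) * ((1 - η0) * Pg1 - η0 * Pg0) ≤ (1 - η0) * Pf1 - η0 * Pf0 := by
    linarith
  have k1u : (1 - η0) * Pf1 - η0 * Pf0 ≤ (1 + 0.45 * ε) * ((1 - η0) * Pg1 - η0 * Pg0) := by
    linarith
  refine ⟨⟨?_, ?_⟩, ?_, ?_⟩ <;> rw [mul_div_assoc']
  · exact div_le_div_of_nonneg_right k0l hd0.le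
  · exact div_le_div_of_nonneg_right k0u hd0.le
  · exact div_le_div_of_nonneg_right k1l hd1.le
  · exact div_le_div_of_nonneg_right k1u hd1.le
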